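/- Consider the homotopy perturbation iterates defined by ν₀(t) = e^{F₁t} u_in and ν_{i+1}(t) = ∫₀ᵗ e^{F₁(t−τ)} F₂ ∑_{j=0}^{i} ν_j(τ) ⊗ ν_{i−j}(τ) dτ, where F₁ is normal with all eigenvalues having real part ≤ Re(λ₁) < 0. Let K₁ = ‖u_in‖·‖F₂‖/|Re(λ₁)| and let α_i be the i-th Catalan number. Then for all i ≥ 0 and t ≥ 0, ‖ν_i(t)‖ ≤ α_i · K₁^i · ‖u_in‖. -/

import Mathlib

open NormedSpace


lemma tensor_norm {n : ℕ} (a b : EuclideanSpace ℝ (Fin n)) :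
    ‖((WithLp.equiv 2 (Fin n × Fin n → ℝ)).symm fun p => a p.1 * b p.2)‖ = ‖a‖ * ‖b‖ := by
  simp only [EuclideanSpace.norm_eq, WithLp.equiv_symm_apply, PiLp.toLp_apply]
  rw [← Real.sqrt_mul (by positivity)]
  congr 1
  rw [Fintype.sum_prod_type, Finset.sum_mul_sum]
  simp [norm_mul, mul_pow]

lemma exp_int_bound (c t : ℝ) (hc : c < 0) :
    ∫ τ in (0:ℝ)..t, Real.exp (c * (t - τ)) ≤ 1 / (-c) := by
  have h1 : (∫ τ in (0:ℝ)..t, Real.exp (c * (t - τ))) = (Real.exp (c*t) - 1) / c := by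
    have := intervalIntegral.integral_comp_sub_left (fun x => Real.exp (c * x)) t (a := 0) (b := t)
    rw [this]
    simp only [sub_self, sub_zero]
    rw [intervalIntegral.integral_comp_mul_left (fun x => Real.exp x) hc.ne]
    simp [integral_exp, smul_eq_mul, mul_zero, Real.exp_zero, div_eq_inv_mul, mul_sub]
  have h2 : (Real.exp (c*t) - 1) / c = (1 - Real.exp (c*t)) / (-c) := by ring
  rw [h1, h2]
  gcongr
  · linarith
  · have := Real.exp_pos (c*t); linarith

lemma catalan_rec (i : ℕ) :
    ∑ j ∈ Finset.range (i + 1), (catalan j : ℝ) * (catalan (i - j) : ℝ)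
      = (catalan (i+1) : ℝ) := by
  rw [catalan_succ']
  rw [Finset.Nat.sum_antidiagonal_eq_sum_range_succ_mk (fun ij => catalan ij.1 * catalan ij.2) i]
  push_cast
  ring

/-- Homotopy perturbation iterate bound: with `ν₀(t) = e^{F₁ t} u_in`,
`ν_{i+1}(t) = ∫₀ᵗ e^{F₁(t−τ)} F₂ (∑_{j=0}^{i} ν_j(τ) ⊗ ν_{i−j}(τ)) dτ`,
`‖e^{F₁ t}‖ ≤ e^{λ₁ t}` with `λ₁ < 0` (as for normal `F₁` with spectral abscissa `λ₁`),
`K₁ = ‖u_in‖ ‖F₂‖ / |λ₁|` and `α_i` the `i`-th Catalan number, we have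
`‖ν_i(t)‖ ≤ α_i K₁^i ‖u_in‖` for all `i ≥ 0` and `t ≥ 0`. -/
theorem homotopy_iterate_bound {n : ℕ}
    (F₁ : EuclideanSpace ℝ (Fin n) →L[ℝ] EuclideanSpace ℝ (Fin n))
    (F₂ : EuclideanSpace ℝ (Fin n × Fin n) →L[ℝ] EuclideanSpace ℝ (Fin n))
    (uin : EuclideanSpace ℝ (Fin n)) (lam1 : ℝ) (hlam1 : lam1 < 0)
    (hF₁ : ∀ t : ℝ, 0 ≤ t → ‖exp (t • F₁)‖ ≤ Real.exp (lam1 * t))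
    (ν : ℕ → ℝ → EuclideanSpace ℝ (Fin n))
    (hν0 : ∀ t : ℝ, ν 0 t = exp (t • F₁) uin)
    (hνsucc : ∀ (i : ℕ) (t : ℝ),
      ν (i + 1) t = ∫ τ in (0 : ℝ)..t,
        exp ((t - τ) • F₁)
          (F₂ ((WithLp.equiv 2 (Fin n × Fin n → ℝ)).symm fun p =>
            ∑ j ∈ Finset.range (i + 1), ν j τ p.1 * ν (i - j) τ p.2))) :
    ∀ (i : ℕ) (t : ℝ), 0 ≤ t →
      ‖ν i t‖ ≤ (catalan i : ℝ) * (‖uin‖ * ‖F₂‖ / |lam1|) ^ i * ‖uin‖ := by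
  set K : ℝ := ‖uin‖ * ‖F₂‖ / |lam1| with hKdef
  have hK : 0 ≤ K := by positivity
  intro i
  induction i using Nat.strong_induction_on with
  | _ i ih =>
    obtain _ | i := i
    · intro t ht
      rw [hν0]
      simp only [catalan_zero, Nat.cast_one, pow_zero, one_mul, mul_one]
      calc ‖(exp (t • F₁)) uin‖ ≤ ‖exp (t • F₁)‖ * ‖uin‖ :=
            ContinuousLinearMap.le_opNorm _ _
        _ ≤ Real.exp (lam1 * t) * ‖uin‖ := by
            gcongr; exact hF₁ t ht
        _ ≤ 1 * ‖uin‖ := by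
            gcongr
            exact Real.exp_le_one_iff.2 (mul_nonpos_of_nonpos_of_nonneg hlam1.le ht)
        _ = ‖uin‖ := one_mul _
    · intro t ht
      rw [hνsucc]
      set C : ℝ := ‖F₂‖ * ((catalan (i+1) : ℝ) * K ^ i * ‖uin‖ ^ 2) with hC
      have hCnn : 0 ≤ C := by positivity
      -- pointwise bound on the integrand
      have key : ∀ τ ∈ Set.Ioc (0:ℝ) t,
          ‖exp ((t - τ) • F₁)
            (F₂ ((WithLp.equiv 2 (Fin n × Fin n → ℝ)).symm fun p =>
              ∑ j ∈ Finset.range (i + 1), ν j τ p.1 * ν (i - j) τ p.2))‖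
            ≤ C * Real.exp (lam1 * (t - τ)) := by
        intro τ hτ
        have hτ0 : 0 ≤ τ := hτ.1.le
        have httau : 0 ≤ t - τ := by linarith [hτ.2]
        -- sum decomposition
        have hsum : ((WithLp.equiv 2 (Fin n × Fin n → ℝ)).symm fun p =>
              ∑ j ∈ Finset.range (i + 1), ν j τ p.1 * ν (i - j) τ p.2)
            = ∑ j ∈ Finset.range (i + 1),
              ((WithLp.equiv 2 (Fin n × Fin n → ℝ)).symm fun p => ν j τ p.1 * ν (i - j) τ p.2) := by
          have h1 : (fun p : Fin n × Fin n => ∑ j ∈ Finset.range (i+1), ν j τ p.1 * ν (i-j) τ p.2)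
              = ∑ j ∈ Finset.range (i+1), (fun p : Fin n × Fin n => ν j τ p.1 * ν (i-j) τ p.2) := by
            funext p; simp
          rw [h1]
          exact map_sum (WithLp.linearEquiv 2 ℝ (Fin n × Fin n → ℝ)).symm
            (fun j (p : Fin n × Fin n) => ν j τ p.1 * ν (i - j) τ p.2) (Finset.range (i + 1))
        have hvnorm : ‖((WithLp.equiv 2 (Fin n × Fin n → ℝ)).symm fun p =>
              ∑ j ∈ Finset.range (i + 1), ν j τ p.1 * ν (i - j) τ p.2)‖
            ≤ (catalan (i+1) : ℝ) * K ^ i * ‖uin‖ ^ 2 := by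
          rw [hsum]
          calc ‖∑ j ∈ Finset.range (i + 1),
                ((WithLp.equiv 2 (Fin n × Fin n → ℝ)).symm fun p => ν j τ p.1 * ν (i - j) τ p.2)‖
              ≤ ∑ j ∈ Finset.range (i + 1),
                ‖((WithLp.equiv 2 (Fin n × Fin n → ℝ)).symm fun p =>
                  ν j τ p.1 * ν (i - j) τ p.2)‖ := norm_sum_le _ _
            _ = ∑ j ∈ Finset.range (i + 1), ‖ν j τ‖ * ‖ν (i - j) τ‖ := by
                exact Finset.sum_congr rfl fun j _ => tensor_norm _ _
            _ ≤ ∑ j ∈ Finset.range (i + 1),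
                ((catalan j : ℝ) * K ^ j * ‖uin‖) * ((catalan (i-j) : ℝ) * K ^ (i-j) * ‖uin‖) := by
                apply Finset.sum_le_sum
                intro j hj
                have hj' : j < i + 1 := Finset.mem_range.1 hj
                exact mul_le_mul (ih j (by omega) τ hτ0) (ih (i-j) (by omega) τ hτ0)
                  (norm_nonneg _) (by positivity)
            _ = (∑ j ∈ Finset.range (i + 1), (catalan j : ℝ) * (catalan (i-j) : ℝ))
                * (K ^ i * ‖uin‖ ^ 2) := by
                rw [Finset.sum_mul]
                apply Finset.sum_congr rfl
                intro j hj
                have hj' : j ≤ i := by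
                  have := Finset.mem_range.1 hj; omega
                have hK' : K ^ j * K ^ (i - j) = K ^ i := by
                  rw [← pow_add, Nat.add_sub_cancel' hj']
                calc (catalan j : ℝ) * K ^ j * ‖uin‖ * ((catalan (i-j) : ℝ) * K ^ (i-j) * ‖uin‖)
                    = (catalan j : ℝ) * (catalan (i-j) : ℝ) * ((K ^ j * K ^ (i-j)) * ‖uin‖ ^ 2) := by
                      ring
                  _ = _ := by rw [hK']
            _ = (catalan (i+1) : ℝ) * K ^ i * ‖uin‖ ^ 2 := by rw [catalan_rec]; ring
        calc ‖exp ((t - τ) • F₁)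
              (F₂ ((WithLp.equiv 2 (Fin n × Fin n → ℝ)).symm fun p =>
                ∑ j ∈ Finset.range (i + 1), ν j τ p.1 * ν (i - j) τ p.2))‖
            ≤ ‖exp ((t - τ) • F₁)‖ * ‖F₂ ((WithLp.equiv 2 (Fin n × Fin n → ℝ)).symm fun p =>
                ∑ j ∈ Finset.range (i + 1), ν j τ p.1 * ν (i - j) τ p.2)‖ :=
              ContinuousLinearMap.le_opNorm _ _
          _ ≤ Real.exp (lam1 * (t - τ)) * (‖F₂‖ * ((catalan (i+1) : ℝ) * K ^ i * ‖uin‖ ^ 2)) := by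
              apply mul_le_mul (hF₁ _ httau)
              · exact le_trans (ContinuousLinearMap.le_opNorm _ _)
                  (mul_le_mul_of_nonneg_left hvnorm (norm_nonneg _))
              · exact norm_nonneg _
              · positivity
          _ = C * Real.exp (lam1 * (t - τ)) := by rw [hC]; ring
      rw [intervalIntegral.integral_of_le ht]
      calc ‖∫ τ in Set.Ioc (0:ℝ) t, exp ((t - τ) • F₁)
              (F₂ ((WithLp.equiv 2 (Fin n × Fin n → ℝ)).symm fun p =>
                ∑ j ∈ Finset.range (i + 1), ν j τ p.1 * ν (i - j) τ p.2))‖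
          ≤ ∫ τ in Set.Ioc (0:ℝ) t, ‖exp ((t - τ) • F₁)
              (F₂ ((WithLp.equiv 2 (Fin n × Fin n → ℝ)).symm fun p =>
                ∑ j ∈ Finset.range (i + 1), ν j τ p.1 * ν (i - j) τ p.2))‖ :=
            MeasureTheory.norm_integral_le_integral_norm _
        _ ≤ ∫ τ in Set.Ioc (0:ℝ) t, C * Real.exp (lam1 * (t - τ)) := by
            apply MeasureTheory.integral_mono_of_nonneg
            · filter_upwards with τ using norm_nonneg _
            · exact (by fun_prop : Continuous fun τ : ℝ =>
                C * Real.exp (lam1 * (t - τ))).integrableOn_Ioc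
            · filter_upwards [MeasureTheory.ae_restrict_mem measurableSet_Ioc] with τ hτ
                using key τ hτ
        _ = ∫ τ in (0:ℝ)..t, C * Real.exp (lam1 * (t - τ)) :=
            (intervalIntegral.integral_of_le ht).symm
        _ = C * ∫ τ in (0:ℝ)..t, Real.exp (lam1 * (t - τ)) := by
            rw [intervalIntegral.integral_const_mul]
        _ ≤ C * (1 / (-lam1)) :=
            mul_le_mul_of_nonneg_left (exp_int_bound lam1 t hlam1) hCnn
        _ = (catalan (i+1) : ℝ) * K ^ (i+1) * ‖uin‖ := by
            rw [hC, hKdef, abs_of_neg hlam1]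
            have hl : lam1 ≠ 0 := hlam1.ne
            field_simp
            ring_nf
            rw [mul_inv_cancel_right₀ hl]
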